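/- If any sequence of n elements (from some linearly ordered setting) contains a monotonic subsequence of length at least n^δ for a fixed 0 < δ < 1, then any sequence of length n can be partitioned into at most C(δ)·n^{1−δ} monotonic subsequences, where C(δ) = (3 − 2δ)/(1 − δ). -/

import Mathlib

-- key analytic inequality
lemma key_ineq (δ : ℝ) (hδ0 : 0 < δ) (hδ1 : δ < 1) (M l : ℝ) (hM : 1 ≤ M)
    (hlM : l ≤ M) (hl : M ^ δ ≤ l) :
    (M - l) ^ (1 - δ) + (1 - δ) ≤ M ^ (1 - δ) := by
  have hMpos : (0 : ℝ) < M := lt_of_lt_of_le one_pos hM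
  set c : ℝ := 1 - δ with hc
  have hc0 : 0 < c := by simp [hc]; linarith
  have hl0 : 0 ≤ l := le_trans (Real.rpow_nonneg (by linarith) δ) hl
  have hu0 : 0 ≤ (M - l) / M := div_nonneg (by linarith) hMpos.le
  have hamgm : ((M - l) / M) ^ c * (1:ℝ) ^ (1 - c) ≤ c * ((M - l) / M) + (1 - c) * 1 :=
    Real.geom_mean_le_arith_mean2_weighted hc0.le (by simp [hc]; linarith) hu0 zero_le_one
      (by ring)
  rw [Real.one_rpow, mul_one, mul_one] at hamgm
  have hsplit : (M - l) ^ c = M ^ c * ((M - l) / M) ^ c := by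
    rw [← Real.mul_rpow hMpos.le hu0, mul_div_cancel₀ _ hMpos.ne']
  have hMc : 0 < M ^ c := Real.rpow_pos_of_pos hMpos c
  have h2 : (M - l) ^ c ≤ M ^ c * (c * ((M - l) / M) + (1 - c)) := by
    rw [hsplit]; exact mul_le_mul_of_nonneg_left hamgm hMc.le
  have h3 : M ^ c * (c * ((M - l) / M) + (1 - c)) = M ^ c - c * (M ^ c / M * l) := by
    field_simp; ring
  -- M^c / M * l ≥ M^c/M * M^δ = M^{c-1+δ} = 1
  have h4 : (1:ℝ) ≤ M ^ c / M * l := by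
    have : M ^ c / M * M ^ δ = 1 := by
      rw [div_mul_eq_mul_div, ← Real.rpow_add hMpos, hc,
        show (1:ℝ) - δ + δ = 1 by ring, Real.rpow_one, div_self hMpos.ne']
    calc (1:ℝ) = M ^ c / M * M ^ δ := this.symm
      _ ≤ M ^ c / M * l := by
          apply mul_le_mul_of_nonneg_left hl
          positivity
  nlinarith [hMc]

section
variable {α : Type*} [LinearOrder α]

lemma extract_one (δ : ℝ) (hδ0 : 0 < δ)
    (hext : ∀ (m : ℕ), 1 ≤ m → ∀ b : Fin m → α,
      ∃ (l : ℕ) (σ : Fin l → Fin m), StrictMono σ ∧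
        (Monotone (b ∘ σ) ∨ Antitone (b ∘ σ)) ∧ (m : ℝ) ^ δ ≤ (l : ℝ))
    {n : ℕ} (a : Fin n → α) (s : Finset (Fin n)) (hs : s.Nonempty) :
    ∃ T : Finset (Fin n), T ⊆ s ∧ T.Nonempty ∧ (s.card : ℝ) ^ δ ≤ (T.card : ℝ) ∧
      (MonotoneOn a ↑T ∨ AntitoneOn a ↑T) := by
  have hm : 1 ≤ s.card := Finset.card_pos.mpr hs
  set m := s.card with hmdef
  let e : Fin m ≃o s := s.orderIsoOfFin rfl
  obtain ⟨l, σ, hσ, hmono, hl⟩ := hext m hm (fun j => a ((e j) : Fin n))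
  set g : Fin l → Fin n := fun j => ((e (σ j)) : Fin n) with hg
  have hgmono : StrictMono g := fun i j hij => by
    exact Subtype.coe_lt_coe.mpr (e.strictMono (hσ hij))
  refine ⟨Finset.image g Finset.univ, ?_, ?_, ?_, ?_⟩
  · intro x hx
    obtain ⟨j, _, rfl⟩ := Finset.mem_image.mp hx
    exact (e (σ j)).2
  · rw [← Finset.card_pos, Finset.card_image_of_injective _ hgmono.injective,
      Finset.card_univ, Fintype.card_fin]
    have h1 : (1 : ℝ) ≤ (m : ℝ) ^ δ :=
      Real.one_le_rpow (by exact_mod_cast hm) hδ0.le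
    have : (1 : ℝ) ≤ (l : ℝ) := le_trans h1 hl
    exact_mod_cast lt_of_lt_of_le zero_lt_one this
  · rw [Finset.card_image_of_injective _ hgmono.injective, Finset.card_univ,
      Fintype.card_fin]
    exact hl
  · rcases hmono with h | h
    · left
      intro x hx y hy hxy
      obtain ⟨j, _, rfl⟩ := Finset.mem_image.mp (Finset.mem_coe.mp hx)
      obtain ⟨k, _, rfl⟩ := Finset.mem_image.mp (Finset.mem_coe.mp hy)
      exact h (hgmono.le_iff_le.mp hxy)
    · right
      intro x hx y hy hxy
      obtain ⟨j, _, rfl⟩ := Finset.mem_image.mp (Finset.mem_coe.mp hx)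
      obtain ⟨k, _, rfl⟩ := Finset.mem_image.mp (Finset.mem_coe.mp hy)
      exact h (hgmono.le_iff_le.mp hxy)

lemma cover_lemma (δ : ℝ) (hδ0 : 0 < δ) (hδ1 : δ < 1)
    (hext : ∀ (m : ℕ), 1 ≤ m → ∀ b : Fin m → α,
      ∃ (l : ℕ) (σ : Fin l → Fin m), StrictMono σ ∧
        (Monotone (b ∘ σ) ∨ Antitone (b ∘ σ)) ∧ (m : ℝ) ^ δ ≤ (l : ℝ))
    {n : ℕ} (a : Fin n → α) :
    ∀ (m : ℕ) (s : Finset (Fin n)), s.card ≤ m →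
      ∃ L : List (Finset (Fin n)),
        (∀ T ∈ L, MonotoneOn a ↑T ∨ AntitoneOn a ↑T) ∧
        (∀ i ∈ s, ∃ T ∈ L, i ∈ T) ∧
        (L.length : ℝ) * (1 - δ) ≤ (s.card : ℝ) ^ (1 - δ) := by
  intro m
  induction m with
  | zero =>
    intro s hcard
    refine ⟨[], by simp, ?_, ?_⟩
    · intro i hi
      rw [Finset.card_eq_zero.mp (Nat.le_zero.mp hcard)] at hi
      simp at hi
    · simp
      positivity
  | succ m ih =>
    intro s hcard
    by_cases hs : s.Nonempty
    · obtain ⟨T, hTs, hTne, hTcard, hTmono⟩ := extract_one δ hδ0 hext a s hs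
      have hT1 : 1 ≤ T.card := Finset.card_pos.mpr hTne
      have hTle : T.card ≤ s.card := Finset.card_le_card hTs
      have hcard' : (s \ T).card ≤ m := by
        rw [Finset.card_sdiff_of_subset hTs]; omega
      obtain ⟨L', hL'mono, hL'cov, hL'len⟩ := ih (s \ T) hcard'
      refine ⟨T :: L', ?_, ?_, ?_⟩
      · intro U hU
        rcases List.mem_cons.mp hU with rfl | hU
        · exact hTmono
        · exact hL'mono U hU
      · intro i hi
        by_cases hiT : i ∈ T
        · exact ⟨T, List.mem_cons_self, hiT⟩
        · obtain ⟨U, hU, hiU⟩ := hL'cov i (Finset.mem_sdiff.mpr ⟨hi, hiT⟩)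
          exact ⟨U, List.mem_cons_of_mem _ hU, hiU⟩
      · have hkey := key_ineq δ hδ0 hδ1 (s.card : ℝ) (T.card : ℝ)
          (by exact_mod_cast Finset.card_pos.mpr hs) (by exact_mod_cast hTle) hTcard
        have hsd : ((s \ T).card : ℝ) = (s.card : ℝ) - (T.card : ℝ) := by
          rw [Finset.card_sdiff_of_subset hTs]
          push_cast [Nat.cast_sub hTle]
          ring
        rw [List.length_cons]
        push_cast
        rw [hsd] at hL'len
        nlinarith
    · rw [Finset.not_nonempty_iff_eq_empty] at hs
      subst hs
      refine ⟨[], by simp, by simp, ?_⟩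
      simp
      positivity

end

theorem partition_from_extraction {α : Type*} [LinearOrder α] (δ : ℝ)
    (hδ0 : 0 < δ) (hδ1 : δ < 1)
    (hext : ∀ (m : ℕ), 1 ≤ m → ∀ b : Fin m → α,
      ∃ (l : ℕ) (σ : Fin l → Fin m), StrictMono σ ∧
        (Monotone (b ∘ σ) ∨ Antitone (b ∘ σ)) ∧ (m : ℝ) ^ δ ≤ (l : ℝ)) :
    ∀ (n : ℕ), (2 : ℝ) ^ (1 / δ) ≤ (n : ℝ) → ∀ a : Fin n → α,
      ∃ (t : ℕ) (f : Fin n → Fin t),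
        (t : ℝ) ≤ (3 - 2 * δ) / (1 - δ) * (n : ℝ) ^ (1 - δ) ∧
        ∀ p : Fin t, MonotoneOn a {i | f i = p} ∨ AntitoneOn a {i | f i = p} := by
  intro n hn a
  have hn1 : 1 ≤ n := by
    have h1 : (1 : ℝ) ≤ (2 : ℝ) ^ (1 / δ) :=
      Real.one_le_rpow one_le_two (by positivity)
    exact_mod_cast le_trans h1 hn
  obtain ⟨L, hLmono, hLcov, hLlen⟩ :=
    cover_lemma δ hδ0 hδ1 hext a n Finset.univ (by simp)
  have hL0 : 0 < L.length := by
    obtain ⟨T, hT, _⟩ := hLcov ⟨0, hn1⟩ (Finset.mem_univ _)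
    exact List.length_pos_iff.mpr (List.ne_nil_of_mem hT)
  have hfind : ∀ i : Fin n, L.findIdx (fun T => i ∈ T) < L.length := by
    intro i
    apply List.findIdx_lt_length_of_exists
    obtain ⟨T, hT, hiT⟩ := hLcov i (Finset.mem_univ _)
    exact ⟨T, hT, by simpa using hiT⟩
  refine ⟨L.length, fun i => ⟨L.findIdx (fun T => i ∈ T), hfind i⟩, ?_, ?_⟩
  · have h1c : (0 : ℝ) < 1 - δ := by linarith
    have hnc : (0 : ℝ) ≤ (n : ℝ) ^ (1 - δ) := Real.rpow_nonneg (Nat.cast_nonneg n) _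
    rw [Finset.card_univ, Fintype.card_fin] at hLlen
    rw [div_mul_eq_mul_div, le_div_iff₀ h1c]
    nlinarith
  · intro p
    have hp : (p : ℕ) < L.length := p.isLt
    have hsub : {i : Fin n | (⟨L.findIdx (fun T => i ∈ T), hfind i⟩ : Fin L.length) = p}
        ⊆ ↑(L.get ⟨p, hp⟩) := by
      intro i hi
      have h1 : L.findIdx (fun T => i ∈ T) = (p : ℕ) := congrArg Fin.val hi
      have h2 := List.findIdx_getElem (p := fun T => decide (i ∈ T)) (xs := L)
        (w := hfind i)
      simp only [decide_eq_true_eq] at h2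
      rw [Finset.mem_coe, List.get_eq_getElem]
      simp only [h1] at h2
      simpa using h2
    rcases hLmono (L.get ⟨p, hp⟩) (List.get_mem L ⟨p, hp⟩) with h | h
    · exact Or.inl (h.mono hsub)
    · exact Or.inr (h.mono hsub)
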